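/- Let (P, Ω) be a poset with an ℝ-flow, let F be an intersection-closed family of intervals in P that is closed under the action of Ω, let ε ≥ 0, and let I, J ∈ F. If I is 4ε-significant and the ordered pair (C(I), C(J)) is left ε-interleaved, then C(I) and C(J) are ε-interleaved. -/

import Mathlib

open CategoryTheory
open scoped Classical ENNReal NNReal

set_option linter.unusedSectionVars false
set_option linter.unusedVariables false

/-! ## Posets, intervals, flows -/

variable {P : Type} [PartialOrder P]

/-- A subset of a poset is poset-convex if it contains every point between two of its points. -/
def PosetConvex (I : Set P) : Prop :=
  ∀ ⦃p q r : P⦄, p ∈ I → q ∈ I → p ≤ r → r ≤ q → r ∈ I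

/-- A subset of a poset is poset-connected if any two of its points are joined by a
zigzag path inside the subset. -/
def PosetConnected (I : Set P) : Prop :=
  ∀ p ∈ I, ∀ q ∈ I,
    Relation.ReflTransGen (fun a b => b ∈ I ∧ (a ≤ b ∨ b ≤ a)) p q

/-- An interval in a poset is a poset-convex and poset-connected subset. -/
def IsInterval (I : Set P) : Prop := PosetConvex I ∧ PosetConnected I

/-- `Q` is a poset-connected component of `U`: a poset-connected subset of `U`, maximal with
respect to inclusion among poset-connected subsets of `U`. -/
def IsPosetComponent (U Q : Set P) : Prop :=
  Q ⊆ U ∧ PosetConnected Q ∧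
    ∀ Q' : Set P, Q' ⊆ U → PosetConnected Q' → Q ⊆ Q' → Q' = Q

/-- A subset `Q` of `I ∩ J` is `(I,J)`-valid. -/
def IsValid (I J Q : Set P) : Prop :=
  ∀ p ∈ Q, (∀ q ∈ I, q ≤ p → q ∈ J) ∧ (∀ r ∈ J, p ≤ r → r ∈ I)

/-- An `ℝ`-flow on a poset. -/
structure RFlow (P : Type) [PartialOrder P] where
  Ω : ℝ → P → P
  mono : ∀ t : ℝ, Monotone (Ω t)
  mono_param : ∀ {t s : ℝ}, t ≤ s → ∀ p : P, Ω t p ≤ Ω s p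
  add : ∀ t s : ℝ, ∀ p : P, Ω (t + s) p = Ω t (Ω s p)
  zero : ∀ p : P, Ω 0 p = p

/-- The `t`-shift `I(t)` of a subset of a poset with an `ℝ`-flow. -/
def RFlow.shiftSet (Φ : RFlow P) (I : Set P) (t : ℝ) : Set P := {p : P | Φ.Ω t p ∈ I}

lemma RFlow.self_le (Φ : RFlow P) {t : ℝ} (ht : 0 ≤ t) (p : P) : p ≤ Φ.Ω t p := by
  have h := Φ.mono_param ht p
  rwa [Φ.zero] at h

lemma RFlow.self_le_twice (Φ : RFlow P) {t : ℝ} (ht : 0 ≤ t) (p : P) :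
    p ≤ Φ.Ω t (Φ.Ω t p) :=
  (Φ.self_le ht p).trans (Φ.self_le ht _)

lemma RFlow.omega_neg_omega (Φ : RFlow P) (t : ℝ) (p : P) : Φ.Ω (-t) (Φ.Ω t p) = p := by
  have h := Φ.add (-t) t p
  rw [neg_add_cancel, Φ.zero] at h
  exact h.symm

lemma RFlow.omega_omega_neg (Φ : RFlow P) (t : ℝ) (p : P) : Φ.Ω t (Φ.Ω (-t) p) = p := by
  have h := Φ.add t (-t) p
  rw [add_neg_cancel, Φ.zero] at h
  exact h.symm

lemma RFlow.posetConvex_shiftSet (Φ : RFlow P) {I : Set P} (hI : PosetConvex I) (t : ℝ) :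
    PosetConvex (Φ.shiftSet I t) := by
  intro p q r hp hq hpr hrq
  exact hI hp hq (Φ.mono t hpr) (Φ.mono t hrq)

lemma RFlow.posetConnected_shiftSet (Φ : RFlow P) {I : Set P} (hI : PosetConnected I) (t : ℝ) :
    PosetConnected (Φ.shiftSet I t) := by
  intro p hp q hq
  have h := hI _ hp _ hq
  have hstep : ∀ a b : P, (b ∈ I ∧ (a ≤ b ∨ b ≤ a)) →
      (Φ.Ω (-t) b ∈ Φ.shiftSet I t ∧ (Φ.Ω (-t) a ≤ Φ.Ω (-t) b ∨ Φ.Ω (-t) b ≤ Φ.Ω (-t) a)) :=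
    fun a b hab => ⟨show Φ.Ω t (Φ.Ω (-t) b) ∈ I by rw [Φ.omega_omega_neg]; exact hab.1,
      hab.2.imp (fun h' => Φ.mono (-t) h') (fun h' => Φ.mono (-t) h')⟩
  have h2 := Relation.ReflTransGen.lift
    (p := fun a b : P => b ∈ Φ.shiftSet I t ∧ (a ≤ b ∨ b ≤ a)) (fun x : P => Φ.Ω (-t) x)
    hstep _ _ h
  simpa only [Function.onFun, Φ.omega_neg_omega] using h2

lemma RFlow.isInterval_shiftSet (Φ : RFlow P) {I : Set P} (hI : IsInterval I) (t : ℝ) :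
    IsInterval (Φ.shiftSet I t) :=
  ⟨Φ.posetConvex_shiftSet hI.1 t, Φ.posetConnected_shiftSet hI.2 t⟩

lemma RFlow.shiftSet_nonempty (Φ : RFlow P) {I : Set P} (hI : I.Nonempty) (t : ℝ) :
    (Φ.shiftSet I t).Nonempty := by
  obtain ⟨x, hx⟩ := hI
  exact ⟨Φ.Ω (-t) x, show Φ.Ω t (Φ.Ω (-t) x) ∈ I by rw [Φ.omega_omega_neg]; exact hx⟩

/-! ## Characteristic (interval) persistence modules -/

variable (K : Type) [Field K]

/-- The pointwise value of the characteristic module of `I`, as a submodule of `K`. -/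
noncomputable def charSub (I : Set P) (p : P) : Submodule K K :=
  if p ∈ I then ⊤ else ⊥

lemma charSub_eq_top {I : Set P} {p : P} (hp : p ∈ I) : charSub K I p = ⊤ := if_pos hp

lemma charSub_eq_bot {I : Set P} {p : P} (hp : p ∉ I) : charSub K I p = ⊥ := if_neg hp

lemma charElt_eq_zero {I : Set P} {p : P} (hp : p ∉ I) (x : ↥(charSub K I p)) : x = 0 := by
  exact Subtype.ext ((Submodule.eq_bot_iff _).mp (charSub_eq_bot K hp) (x : K) x.2)

/-- The structure maps of the characteristic module of `I`. -/
noncomputable def charMap (I : Set P) (p q : P) :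
    ↥(charSub K I p) →ₗ[K] ↥(charSub K I q) :=
  if h : p ∈ I ∧ q ∈ I then
    { toFun := fun x => ⟨(x : K), by rw [charSub_eq_top K h.2]; exact Submodule.mem_top⟩
      map_add' := fun x y => rfl
      map_smul' := fun c x => rfl }
  else 0

lemma charMap_id (I : Set P) (p : P) : charMap K I p p = LinearMap.id := by
  by_cases hp : p ∈ I
  · simp only [charMap, dif_pos (And.intro hp hp)]
    rfl
  · ext x
    rw [charElt_eq_zero K hp x]
    simp

lemma charMap_comp {I : Set P} (hI : PosetConvex I) {p q r : P} (hpq : p ≤ q) (hqr : q ≤ r) :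
    (charMap K I q r).comp (charMap K I p q) = charMap K I p r := by
  by_cases hp : p ∈ I
  · by_cases hr : r ∈ I
    · have hq : q ∈ I := hI hp hr hpq hqr
      ext x
      simp only [charMap, dif_pos (And.intro hp hq), dif_pos (And.intro hq hr),
        dif_pos (And.intro hp hr), LinearMap.comp_apply, LinearMap.coe_mk, AddHom.coe_mk]
    · ext x
      exact congrArg Subtype.val
        ((charElt_eq_zero K hr ((charMap K I q r).comp (charMap K I p q) x)).trans
          (charElt_eq_zero K hr (charMap K I p r x)).symm)
  · ext x
    rw [charElt_eq_zero K hp x]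
    simp

/-- The characteristic persistence module `C(I)` of a poset-convex subset `I`. -/
noncomputable def charMod (I : Set P) (hI : PosetConvex I) : P ⥤ ModuleCat K where
  obj p := ModuleCat.of K ↥(charSub K I p)
  map {p q} h := ModuleCat.ofHom (charMap K I p q)
  map_id p := by rw [charMap_id K I p]; rfl
  map_comp {p q r} h1 h2 := by
    rw [← charMap_comp K hI (leOfHom h1) (leOfHom h2)]; rfl

/-- The zero persistence module, realized as the characteristic module of the empty interval. -/
noncomputable def zeroPMod : P ⥤ ModuleCat K :=
  charMod K (∅ : Set P) (fun _ _ _ hp _ _ _ => absurd hp (Set.notMem_empty _))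

/-! ## Barcodes and interval-decomposable modules -/

/-- A barcode over a poset: a multiset of nonempty intervals, encoded as an indexed family. -/
structure Barcode (P : Type) [PartialOrder P] where
  ι : Type
  B : ι → Set P
  interval : ∀ a : ι, IsInterval (B a)
  nonempty : ∀ a : ι, (B a).Nonempty

/-- The interval-decomposable module `⊕_{a} C(B a)` associated to a barcode. -/
noncomputable def bcMod (D : Barcode P) : P ⥤ ModuleCat K where
  obj p := ModuleCat.of K (Π₀ a : D.ι, ↥(charSub K (D.B a) p))
  map {p q} h := ModuleCat.ofHom (DFinsupp.mapRange.linearMap (fun a => charMap K (D.B a) p q))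
  map_id p := by
    have h : (fun a : D.ι => charMap K (D.B a) p p)
        = fun a : D.ι => (LinearMap.id : ↥(charSub K (D.B a) p) →ₗ[K] ↥(charSub K (D.B a) p)) := by
      funext a; exact charMap_id K (D.B a) p
    show ModuleCat.ofHom (DFinsupp.mapRange.linearMap (fun a => charMap K (D.B a) p p)) = _
    rw [h, DFinsupp.mapRange.linearMap_id]
    rfl
  map_comp {p q r} h1 h2 := by
    have h : (fun a : D.ι => charMap K (D.B a) p r)
        = fun a : D.ι => (charMap K (D.B a) q r).comp (charMap K (D.B a) p q) := by
      funext a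
      exact (charMap_comp K (D.interval a).1 (leOfHom h1) (leOfHom h2)).symm
    show ModuleCat.ofHom (DFinsupp.mapRange.linearMap (fun a => charMap K (D.B a) p r)) = _
    rw [h, DFinsupp.mapRange.linearMap_comp]
    rfl

/-- `M` is interval-decomposable with barcode `D`. -/
def IsDecompositionOf (D : Barcode P) (M : P ⥤ ModuleCat K) : Prop :=
  Nonempty (M ≅ bcMod K D)

/-- The shift of a barcode along a flow. -/
noncomputable def Barcode.shift (D : Barcode P) (Φ : RFlow P) (t : ℝ) : Barcode P where
  ι := D.ι
  B a := Φ.shiftSet (D.B a) t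
  interval a := Φ.isInterval_shiftSet (D.interval a) t
  nonempty a := Φ.shiftSet_nonempty (D.nonempty a) t

/-! ## Shifts of modules, interleavings, distances -/

/-- The shift `M(t)` of a persistence module along a flow. -/
noncomputable def Pshift (Φ : RFlow P) (t : ℝ) (M : P ⥤ ModuleCat K) : P ⥤ ModuleCat K :=
  (Φ.mono t).functor ⋙ M

/-- The ordered pair `(M, N)` is left `ε`-interleaved. -/
noncomputable def LeftInterleaved (Φ : RFlow P) {ε : ℝ} (hε : 0 ≤ ε)
    (M N : P ⥤ ModuleCat K) : Prop :=
  ∃ (f : M ⟶ Pshift K Φ ε N) (g : N ⟶ Pshift K Φ ε M),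
    ∀ p : P, f.app p ≫ g.app (Φ.Ω ε p) = M.map (homOfLE (Φ.self_le_twice hε p))

/-- `M` and `N` are `ε`-interleaved. -/
noncomputable def Interleaved (Φ : RFlow P) {ε : ℝ} (hε : 0 ≤ ε)
    (M N : P ⥤ ModuleCat K) : Prop :=
  ∃ (f : M ⟶ Pshift K Φ ε N) (g : N ⟶ Pshift K Φ ε M),
    (∀ p : P, f.app p ≫ g.app (Φ.Ω ε p) = M.map (homOfLE (Φ.self_le_twice hε p))) ∧
    (∀ p : P, g.app p ≫ f.app (Φ.Ω ε p) = N.map (homOfLE (Φ.self_le_twice hε p)))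

/-- The interleaving distance between two persistence modules. -/
noncomputable def dI (Φ : RFlow P) (M N : P ⥤ ModuleCat K) : ℝ≥0∞ :=
  ⨅ (ε : NNReal) (_ : Interleaved K Φ ε.coe_nonneg M N), (ε : ℝ≥0∞)

/-- An interval `I` is `t`-trivial if the transition morphism `C(I) → C(I(t))` vanishes. -/
noncomputable def IsTrivialIv (Φ : RFlow P) {t : ℝ} (ht : 0 ≤ t)
    (I : Set P) (hI : PosetConvex I) : Prop :=
  ∀ p : P, (charMod K I hI).map (homOfLE (Φ.self_le ht p)) = 0

/-- An `ε`-correspondence between two barcodes. -/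
noncomputable def IsCorrespondence (Φ : RFlow P) {ε : ℝ} (hε : 0 ≤ ε)
    (DM DN : Barcode P) (σ : Set (DM.ι × DN.ι)) : Prop :=
  (∀ ab ∈ σ, Interleaved K Φ hε
      (charMod K (DM.B ab.1) (DM.interval ab.1).1) (charMod K (DN.B ab.2) (DN.interval ab.2).1)) ∧
  (∀ a : DM.ι, (∀ b : DN.ι, (a, b) ∉ σ) →
      Interleaved K Φ hε (charMod K (DM.B a) (DM.interval a).1) (zeroPMod K)) ∧
  (∀ b : DN.ι, (∀ a : DM.ι, (a, b) ∉ σ) →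
      Interleaved K Φ hε (zeroPMod K) (charMod K (DN.B b) (DN.interval b).1))

/-- An `ε`-matching between two barcodes. -/
noncomputable def IsMatching (Φ : RFlow P) {ε : ℝ} (hε : 0 ≤ ε)
    (DM DN : Barcode P) (σ : Set (DM.ι × DN.ι)) : Prop :=
  IsCorrespondence K Φ hε DM DN σ ∧
  (∀ a b b', (a, b) ∈ σ → (a, b') ∈ σ → b = b') ∧
  (∀ a a' b, (a, b) ∈ σ → (a', b) ∈ σ → a = a')

/-- The Hausdorff distance between (modules with) barcodes `DM`, `DN`. -/
noncomputable def dH (Φ : RFlow P) (DM DN : Barcode P) : ℝ≥0∞ :=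
  ⨅ (ε : NNReal) (_ : ∃ σ : Set (DM.ι × DN.ι), IsCorrespondence K Φ ε.coe_nonneg DM DN σ),
    (ε : ℝ≥0∞)

/-- The bottleneck distance between (modules with) barcodes `DM`, `DN`. -/
noncomputable def dB (Φ : RFlow P) (DM DN : Barcode P) : ℝ≥0∞ :=
  ⨅ (ε : NNReal) (_ : ∃ σ : Set (DM.ι × DN.ι), IsMatching K Φ ε.coe_nonneg DM DN σ),
    (ε : ℝ≥0∞)


section Helpers

variable (Φ : RFlow P)

noncomputable def oneOf (I : Set P) (p : P) (hp : p ∈ I) : ↥(charSub K I p) :=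
  ⟨1, by rw [charSub_eq_top K hp]; exact Submodule.mem_top⟩

lemma charMap_val {I : Set P} {p q : P} (hp : p ∈ I) (hq : q ∈ I) (x : ↥(charSub K I p)) :
    ((charMap K I p q x : ↥(charSub K I q)) : K) = (x : K) := by
  simp [charMap, dif_pos (And.intro hp hq)]

lemma charMap_oneOf {I : Set P} {p q : P} (hp : p ∈ I) (hq : q ∈ I) :
    charMap K I p q (oneOf K I p hp) = oneOf K I q hq :=
  Subtype.ext (charMap_val K hp hq _)

lemma charMap_zero' {I : Set P} {p q : P} (h : ¬ (p ∈ I ∧ q ∈ I)) :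
    charMap K I p q = 0 := dif_neg h

lemma eq_smul_oneOf {I : Set P} {p : P} (hp : p ∈ I) (x : ↥(charSub K I p)) :
    x = (x : K) • oneOf K I p hp :=
  Subtype.ext (by show (x : K) = (x : K) * 1; rw [mul_one])

variable {A B : Set P} {hA : PosetConvex A} {hB : PosetConvex B}

noncomputable def natVal {ε : ℝ} (f : charMod K A hA ⟶ Pshift K Φ ε (charMod K B hB))
    (p : P) (hp : p ∈ A) : K :=
  (show ↥(charSub K B (Φ.Ω ε p)) from f.app p (oneOf K A p hp)).1

lemma nat_elt {ε : ℝ} (f : charMod K A hA ⟶ Pshift K Φ ε (charMod K B hB))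
    {p q : P} (hpq : p ≤ q) (x : ↥(charSub K A p)) :
    (f.app q (charMap K A p q x) : ↥(charSub K B (Φ.Ω ε q)))
      = charMap K B (Φ.Ω ε p) (Φ.Ω ε q) (f.app p x) :=
  congrArg (fun (t : (charMod K A hA).obj p ⟶ (Pshift K Φ ε (charMod K B hB)).obj q) => t x)
    (f.naturality (homOfLE hpq))

lemma natVal_const {ε : ℝ} (f : charMod K A hA ⟶ Pshift K Φ ε (charMod K B hB))
    {p q : P} (hpq : p ≤ q) (hp : p ∈ A) (hq : q ∈ A)
    (hp' : Φ.Ω ε p ∈ B) (hq' : Φ.Ω ε q ∈ B) :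
    natVal K Φ f q hq = natVal K Φ f p hp := by
  have h := nat_elt K Φ f hpq (oneOf K A p hp)
  rw [charMap_oneOf K hp hq] at h
  exact (congrArg Subtype.val h).trans (charMap_val K hp' hq' _)

lemma natVal_eq_zero_up {ε : ℝ} (f : charMod K A hA ⟶ Pshift K Φ ε (charMod K B hB))
    {p q : P} (hpq : p ≤ q) (hp : p ∈ A) (hq : q ∉ A)
    (hp' : Φ.Ω ε p ∈ B) (hq' : Φ.Ω ε q ∈ B) :
    natVal K Φ f p hp = 0 := by
  have h := nat_elt K Φ f hpq (oneOf K A p hp)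
  have h0 : charMap K A p q (oneOf K A p hp) = 0 := by
    rw [charMap_zero' K (fun hc => hq hc.2)]; rfl
  erw [h0, map_zero] at h
  exact (charMap_val K hp' hq' _).symm.trans (congrArg Subtype.val h.symm)

lemma natVal_eq_zero_down {ε : ℝ} (f : charMod K A hA ⟶ Pshift K Φ ε (charMod K B hB))
    {p q : P} (hpq : p ≤ q) (hp : p ∈ A) (hq : q ∈ A)
    (hp' : Φ.Ω ε p ∉ B) :
    natVal K Φ f q hq = 0 := by
  have h := nat_elt K Φ f hpq (oneOf K A p hp)
  rw [charMap_oneOf K hp hq] at h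
  erw [charMap_zero' K (fun hc => hp' hc.1), LinearMap.zero_apply] at h
  exact congrArg Subtype.val h

lemma natVal_zigzag {ε : ℝ} (f : charMod K A hA ⟶ Pshift K Φ ε (charMod K B hB))
    (hconn : PosetConnected {x | x ∈ A ∧ Φ.Ω ε x ∈ B})
    {p q : P} (hp : p ∈ A) (hp' : Φ.Ω ε p ∈ B) (hq : q ∈ A) (hq' : Φ.Ω ε q ∈ B) :
    natVal K Φ f q hq = natVal K Φ f p hp := by
  suffices H : ∀ x, Relation.ReflTransGen
      (fun a b => b ∈ {x | x ∈ A ∧ Φ.Ω ε x ∈ B} ∧ (a ≤ b ∨ b ≤ a)) p x →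
      ∃ (hx : x ∈ A) (_ : Φ.Ω ε x ∈ B), natVal K Φ f x hx = natVal K Φ f p hp by
    obtain ⟨hx, hx', e⟩ := H q (hconn p ⟨hp, hp'⟩ q ⟨hq, hq'⟩)
    exact e
  intro x hx
  induction hx with
  | refl => exact ⟨hp, hp', rfl⟩
  | tail _ hbc ih =>
    obtain ⟨hb, hb', e⟩ := ih
    obtain ⟨⟨hc, hc'⟩, hdir⟩ := hbc
    refine ⟨hc, hc', ?_⟩
    rcases hdir with h1 | h1
    · rw [natVal_const K Φ f h1 hb hc hb' hc']; exact e
    · rw [← natVal_const K Φ f h1 hc hb hc' hb']; exact e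

end Helpers

/-- if `I` is `4ε`-significant and `(C(I), C(J))` is left
`ε`-interleaved, then `C(I)` and `C(J)` are `ε`-interleaved. -/
theorem left_interleaved_implies_interleaved (Φ : RFlow P)
    (F : Set (Set P)) (hFiv : ∀ S ∈ F, IsInterval S)
    (hFcap : ∀ S ∈ F, ∀ T ∈ F, S ∩ T ∈ F)
    (hFflow : ∀ S ∈ F, ∀ t : ℝ, Φ.Ω t '' S ∈ F)
    {ε : ℝ} (hε : 0 ≤ ε) (I J : Set P) (hIF : I ∈ F) (hJF : J ∈ F)
    (hIsig : ¬ IsTrivialIv K Φ (show (0:ℝ) ≤ 4 * ε by linarith) I (hFiv I hIF).1)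
    (hleft : LeftInterleaved K Φ hε
      (charMod K I (hFiv I hIF).1) (charMod K J (hFiv J hJF).1)) :
    Interleaved K Φ hε (charMod K I (hFiv I hIF).1) (charMod K J (hFiv J hJF).1) := by
  obtain ⟨f, g, hfg⟩ := hleft
  have hI : PosetConvex I := (hFiv I hIF).1
  have hJ : PosetConvex J := (hFiv J hJF).1
  -- significance gives a point surviving 4ε
  have hsig : ∃ p, p ∈ I ∧ Φ.Ω (4 * ε) p ∈ I := by
    by_contra hcon
    push_neg at hcon
    apply hIsig
    intro p
    show ModuleCat.ofHom (charMap K I p (Φ.Ω (4 * ε) p)) = 0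
    rw [charMap_zero' K (fun hc => hcon p hc.1 hc.2)]; rfl
  obtain ⟨p₀, h0, h4⟩ := hsig
  have hstep : ∀ x : P, x ≤ Φ.Ω ε x := Φ.self_le hε
  have e4 : Φ.Ω (4 * ε) p₀ = Φ.Ω ε (Φ.Ω ε (Φ.Ω ε (Φ.Ω ε p₀))) := by
    rw [show (4:ℝ) * ε = ε + (ε + (ε + ε)) by ring, Φ.add, Φ.add, Φ.add]
  have h4' : Φ.Ω ε (Φ.Ω ε (Φ.Ω ε (Φ.Ω ε p₀))) ∈ I := e4 ▸ h4
  have h1I : Φ.Ω ε p₀ ∈ I :=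
    hI h0 h4' (hstep p₀) ((hstep _).trans ((hstep _).trans (hstep _)))
  have h2I : Φ.Ω ε (Φ.Ω ε p₀) ∈ I :=
    hI h0 h4' ((hstep p₀).trans (hstep _)) ((hstep _).trans (hstep _))
  have h3I : Φ.Ω ε (Φ.Ω ε (Φ.Ω ε p₀)) ∈ I :=
    hI h0 h4' ((hstep p₀).trans ((hstep _).trans (hstep _))) (hstep _)
  -- the composite equation applied to generators
  have hcomp : ∀ p (hp : p ∈ I),
      (g.app (Φ.Ω ε p) (f.app p (oneOf K I p hp)) : ↥(charSub K I (Φ.Ω ε (Φ.Ω ε p))))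
      = charMap K I p (Φ.Ω ε (Φ.Ω ε p)) (oneOf K I p hp) := by
    intro p hp
    exact congrArg (fun (t : (charMod K I hI).obj p ⟶
      (Pshift K Φ ε (charMod K I hI)).obj (Φ.Ω ε p)) => t (oneOf K I p hp)) (hfg p)
  -- membership: p ∈ I, Ω₂ε p ∈ I ⇒ Ωε p ∈ J
  have hmemJ : ∀ p (hp : p ∈ I), Φ.Ω ε (Φ.Ω ε p) ∈ I → Φ.Ω ε p ∈ J := by
    intro p hp hp2
    by_contra hn
    have h := hcomp p hp
    have hz : (f.app p (oneOf K I p hp) : ↥(charSub K J (Φ.Ω ε p))) = 0 :=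
      charElt_eq_zero K hn _
    erw [hz, map_zero] at h
    exact one_ne_zero
      ((charMap_val K hp hp2 (oneOf K I p hp)).symm.trans (congrArg Subtype.val h.symm)
        : (1 : K) = 0)
  have h1J : Φ.Ω ε p₀ ∈ J := hmemJ p₀ h0 h2I
  have h3J : Φ.Ω ε (Φ.Ω ε (Φ.Ω ε p₀)) ∈ J := hmemJ _ h2I h4'
  -- scalar product equals 1
  have hprod : natVal K Φ f p₀ h0 * natVal K Φ g (Φ.Ω ε p₀) h1J = 1 := by
    have h := hcomp p₀ h0
    have hsm : (f.app p₀ (oneOf K I p₀ h0) : ↥(charSub K J (Φ.Ω ε p₀)))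
        = natVal K Φ f p₀ h0 • oneOf K J (Φ.Ω ε p₀) h1J := eq_smul_oneOf K h1J _
    erw [hsm, map_smul] at h
    exact (congrArg Subtype.val h).trans (charMap_val K h0 h2I _)
  have hcne : natVal K Φ f p₀ h0 ≠ 0 := by
    intro h; rw [h, zero_mul] at hprod; exact one_ne_zero hprod.symm
  have hdne : natVal K Φ g (Φ.Ω ε p₀) h1J ≠ 0 := by
    intro h; rw [h, mul_zero] at hprod; exact one_ne_zero hprod.symm
  -- shifted sets stay in F
  have hshift_mem : ∀ S ∈ F, ∀ t : ℝ, Φ.shiftSet S t ∈ F := by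
    intro S hS t
    have himg := hFflow S hS (-t)
    have heq : Φ.Ω (-t) '' S = Φ.shiftSet S t := by
      ext x
      constructor
      · rintro ⟨y, hy, rfl⟩
        show Φ.Ω t (Φ.Ω (-t) y) ∈ S
        rw [Φ.omega_omega_neg]; exact hy
      · intro hx
        exact ⟨Φ.Ω t x, hx, Φ.omega_neg_omega t x⟩
    rwa [heq] at himg
  have hUconn : PosetConnected {x | x ∈ I ∧ Φ.Ω ε x ∈ J} :=
    (hFiv _ (hFcap I hIF _ (hshift_mem J hJF ε))).2
  have hVconn : PosetConnected {x | x ∈ J ∧ Φ.Ω ε x ∈ I} :=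
    (hFiv _ (hFcap J hJF _ (hshift_mem I hIF ε))).2
  have hWconn : PosetConnected (J ∩ Φ.shiftSet J (ε + ε)) :=
    (hFiv _ (hFcap J hJF _ (hshift_mem J hJF (ε + ε)))).2
  -- constancy of the scalars
  have hfval : ∀ p (hp : p ∈ I), Φ.Ω ε p ∈ J → natVal K Φ f p hp = natVal K Φ f p₀ h0 :=
    fun p hp hp' => natVal_zigzag K Φ f hUconn h0 h1J hp hp'
  have hgval : ∀ q (hq : q ∈ J), Φ.Ω ε q ∈ I →
      natVal K Φ g q hq = natVal K Φ g (Φ.Ω ε p₀) h1J :=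
    fun q hq hq' => natVal_zigzag K Φ g hVconn h1J h2I hq hq'
  -- validity of U and V
  have hd : ∀ u r, u ∈ I → Φ.Ω ε u ∈ J → u ≤ r → Φ.Ω ε r ∈ J → r ∈ I := by
    intro u r hu hu' hur hr'
    by_contra hr
    exact hcne ((hfval u hu hu').symm.trans (natVal_eq_zero_up K Φ f hur hu hr hu' hr'))
  have ha : ∀ x v, x ∈ J → v ∈ J → Φ.Ω ε v ∈ I → x ≤ v → Φ.Ω ε x ∈ I := by
    intro x v hx hv hv' hxv
    by_contra hx'
    exact hdne ((hgval v hv hv').symm.trans (natVal_eq_zero_down K Φ g hxv hx hv hx'))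
  have hadd : ∀ x : P, Φ.Ω (ε + ε) x = Φ.Ω ε (Φ.Ω ε x) := fun x => Φ.add ε ε x
  -- the key geometric step: q ∈ J, Ω₂ε q ∈ J ⇒ Ωε q ∈ I
  have hBV : ∀ q, q ∈ J → Φ.Ω ε (Φ.Ω ε q) ∈ J → Φ.Ω ε q ∈ I := by
    intro q hq hq2
    have hW1 : Φ.Ω ε p₀ ∈ Φ.shiftSet J (ε + ε) := by
      show Φ.Ω (ε + ε) (Φ.Ω ε p₀) ∈ J
      rw [hadd]; exact h3J
    have hWq : q ∈ Φ.shiftSet J (ε + ε) := by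
      show Φ.Ω (ε + ε) q ∈ J
      rw [hadd]; exact hq2
    have hWz := hWconn (Φ.Ω ε p₀) ⟨h1J, hW1⟩ q ⟨hq, hWq⟩
    suffices H : ∀ x, Relation.ReflTransGen
        (fun a b => b ∈ J ∩ Φ.shiftSet J (ε + ε) ∧ (a ≤ b ∨ b ≤ a)) (Φ.Ω ε p₀) x →
        Φ.Ω ε x ∈ I ∧ x ∈ J ∧ Φ.Ω ε (Φ.Ω ε x) ∈ J by
      exact (H q hWz).1
    intro x hx
    induction hx with
    | refl => exact ⟨h2I, h1J, h3J⟩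
    | @tail b c hab hbc ih =>
      obtain ⟨ibI, ibJ, ib2⟩ := ih
      obtain ⟨⟨hc1, hc2'⟩, hdir⟩ := hbc
      have hc2 : Φ.Ω ε (Φ.Ω ε c) ∈ J := by
        have h' : Φ.Ω (ε + ε) c ∈ J := hc2'
        rwa [hadd] at h'
      refine ⟨?_, hc1, hc2⟩
      rcases hdir with h1 | h1
      · exact hd (Φ.Ω ε b) (Φ.Ω ε c) ibI ib2 (Φ.mono ε h1) hc2
      · exact ha c b hc1 ibJ ibI h1
  -- assemble the interleaving
  refine ⟨f, g, hfg, ?_⟩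
  intro q
  by_cases hq : q ∈ J
  · by_cases hq2 : Φ.Ω ε (Φ.Ω ε q) ∈ J
    · have hqI : Φ.Ω ε q ∈ I := hBV q hq hq2
      apply ModuleCat.hom_ext
      apply LinearMap.ext
      intro x
      have he : (g.app q ≫ f.app (Φ.Ω ε q)) (oneOf K J q hq)
          = (charMod K J (hFiv J hJF).1).map (homOfLE (Φ.self_le_twice hε q))
              (oneOf K J q hq) := by
        show (show ↥(charSub K J (Φ.Ω ε (Φ.Ω ε q))) from
            f.app (Φ.Ω ε q) (g.app q (oneOf K J q hq)))
          = charMap K J q (Φ.Ω ε (Φ.Ω ε q)) (oneOf K J q hq)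
        have hg1 : (g.app q (oneOf K J q hq) : ↥(charSub K I (Φ.Ω ε q)))
            = natVal K Φ g q hq • oneOf K I (Φ.Ω ε q) hqI := eq_smul_oneOf K hqI _
        have hf1 : (f.app (Φ.Ω ε q) (oneOf K I (Φ.Ω ε q) hqI)
              : ↥(charSub K J (Φ.Ω ε (Φ.Ω ε q))))
            = natVal K Φ f (Φ.Ω ε q) hqI • oneOf K J (Φ.Ω ε (Φ.Ω ε q)) hq2 :=
          eq_smul_oneOf K hq2 _
        erw [hg1, map_smul, hf1, charMap_oneOf K hq hq2, smul_smul]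
        erw [hgval q hq hqI, hfval (Φ.Ω ε q) hqI hq2,
          mul_comm (natVal K Φ g (Φ.Ω ε p₀) h1J), hprod, one_smul]
      erw [eq_smul_oneOf K hq x, map_smul, map_smul, he]
      rfl
    · apply ModuleCat.hom_ext
      apply LinearMap.ext
      intro x
      exact (charElt_eq_zero K hq2 _).trans (charElt_eq_zero K hq2 _).symm
  · apply ModuleCat.hom_ext
    apply LinearMap.ext
    intro x
    have hx0 : x = 0 := charElt_eq_zero K hq x
    rw [hx0, map_zero, map_zero]
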